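/- For integers t > s > 2 with gcd(s,t) = 1, the graph on s+t+1 vertices consisting of a path (a_0,…,a_{t−1}), a disjoint path (b_0,…,b_{s−2}), and two adjacent vertices a, b, where a is adjacent to all a_i and b is adjacent to all b_j and to a_{t−1}, is erasable and has exactly 2s+2t−2 edges. -/

import Mathlib

open SimpleGraph
/-- One step of the erase process with parameters `s`, `t`: delete an edge `e` that is
the unique edge between a set `V₁` of size `s` and a set `V₂` of size `t`, where
`V₁`, `V₂` and one extra vertex `v` partition the vertex set. -/
def EraseStep (s t : ℕ) {V : Type*} (G G' : SimpleGraph V) : Prop :=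
  ∃ e ∈ G.edgeSet, G'.edgeSet = G.edgeSet \ {e} ∧
    ∃ (V1 V2 : Set V) (v : V),
      Disjoint V1 V2 ∧ v ∉ V1 ∧ v ∉ V2 ∧ V1 ∪ V2 ∪ {v} = Set.univ ∧
      V1.ncard = s ∧ V2.ncard = t ∧
      (∃ x ∈ V1, ∃ y ∈ V2, e = s(x, y)) ∧
      ∀ x ∈ V1, ∀ y ∈ V2, G.Adj x y → s(x, y) = e

/-- `G` is erasable (with parameters `s`, `t`): its edges can be deleted one at a time
by erase steps until no edge remains. -/
def Erasable (s t : ℕ) {V : Type*} (G : SimpleGraph V) : Prop :=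
  ∃ (m : ℕ) (c : ℕ → SimpleGraph V), c 0 = G ∧ c m = ⊥ ∧
    ∀ i < m, EraseStep s t (c i) (c (i + 1))

/-- The graph on `s+t+1` vertices consisting of a path `a₀,…,a_{t−1}` (the `Fin t`
part), a disjoint path `b₀,…,b_{s−2}` (the `Fin (s−1)` part), and two adjacent
vertices `a` (`= 0 : Fin 2`) and `b` (`= 1 : Fin 2`), where `a` is adjacent to all
`aᵢ`, and `b` is adjacent to all `bⱼ` and to `a_{t−1}`. -/
def CoprimeGraph (s t : ℕ) : SimpleGraph (Fin t ⊕ Fin (s - 1) ⊕ Fin 2) :=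
  SimpleGraph.fromRel fun x y =>
    match x, y with
    | Sum.inl i, Sum.inl j => (i : ℕ) + 1 = j
    | Sum.inr (Sum.inl i), Sum.inr (Sum.inl j) => (i : ℕ) + 1 = j
    | Sum.inr (Sum.inr k), Sum.inl i => (k : ℕ) = 0 ∨ ((k : ℕ) = 1 ∧ (i : ℕ) = t - 1)
    | Sum.inr (Sum.inr k), Sum.inr (Sum.inl _) => (k : ℕ) = 1
    | Sum.inr (Sum.inr k), Sum.inr (Sum.inr l) => (k : ℕ) = 0 ∧ (l : ℕ) = 1
    | _, _ => False

namespace CoprimeErase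

abbrev Vt (s t : ℕ) := Fin t ⊕ Fin (s - 1) ⊕ Fin 2

variable (s t : ℕ)

def va : Vt s t := Sum.inr (Sum.inr 0)
def vb : Vt s t := Sum.inr (Sum.inr 1)

def aa [NeZero t] (m : ℕ) : Vt s t :=
  Sum.inl ⟨m % t, Nat.mod_lt _ (Nat.pos_of_ne_zero (NeZero.ne t))⟩

def ba [NeZero (s - 1)] (m : ℕ) : Vt s t :=
  Sum.inr (Sum.inl ⟨m % (s - 1), Nat.mod_lt _ (Nat.pos_of_ne_zero (NeZero.ne (s - 1)))⟩)

/-! ### adjacency lemmas -/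

lemma adj_AA_iff (i j : Fin t) :
    (CoprimeGraph s t).Adj (.inl i) (.inl j) ↔ ((i : ℕ) + 1 = j ∨ (j : ℕ) + 1 = i) := by
  rw [CoprimeGraph, fromRel_adj]
  constructor
  · rintro ⟨-, h | h⟩
    · exact Or.inl h
    · exact Or.inr h
  · intro h
    refine ⟨fun he => ?_, h⟩
    injection he with he'
    subst he'
    omega

lemma adj_AB_iff (i : Fin t) (j : Fin (s - 1)) :
    ¬ (CoprimeGraph s t).Adj (.inl i) (.inr (.inl j)) := by
  rw [CoprimeGraph, fromRel_adj]
  rintro ⟨-, h | h⟩ <;> exact h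

lemma adj_Ava (i : Fin t) : (CoprimeGraph s t).Adj (.inl i) (va s t) := by
  rw [va, CoprimeGraph, fromRel_adj]
  exact ⟨by simp, Or.inr (Or.inl rfl)⟩

lemma adj_Avb_iff (i : Fin t) :
    (CoprimeGraph s t).Adj (.inl i) (vb s t) ↔ (i : ℕ) = t - 1 := by
  rw [vb, CoprimeGraph, fromRel_adj]
  constructor
  · rintro ⟨-, h | h⟩
    · exact h.elim
    · rcases h with h | ⟨-, h⟩
      · simp at h
      · exact h
  · intro h
    exact ⟨by simp, Or.inr (Or.inr ⟨rfl, h⟩)⟩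

lemma adj_BB_iff (i j : Fin (s - 1)) :
    (CoprimeGraph s t).Adj (.inr (.inl i)) (.inr (.inl j)) ↔
      ((i : ℕ) + 1 = j ∨ (j : ℕ) + 1 = i) := by
  rw [CoprimeGraph, fromRel_adj]
  constructor
  · rintro ⟨-, h | h⟩
    · exact Or.inl h
    · exact Or.inr h
  · intro h
    refine ⟨fun he => ?_, h⟩
    injection he with he'
    injection he' with he''
    subst he''
    omega

lemma adj_Bva (j : Fin (s - 1)) : ¬ (CoprimeGraph s t).Adj (.inr (.inl j)) (va s t) := by
  rw [va, CoprimeGraph, fromRel_adj]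
  rintro ⟨-, h | h⟩
  · exact h
  · simp at h

lemma adj_Bvb (j : Fin (s - 1)) : (CoprimeGraph s t).Adj (.inr (.inl j)) (vb s t) := by
  rw [vb, CoprimeGraph, fromRel_adj]
  exact ⟨by simp, Or.inr rfl⟩

lemma adj_vavb : (CoprimeGraph s t).Adj (va s t) (vb s t) := by
  rw [va, vb, CoprimeGraph, fromRel_adj]
  exact ⟨by simp, Or.inl ⟨rfl, rfl⟩⟩

/-! ### mod arithmetic helpers -/

lemma modH1 {u k : ℕ} (hu : u < t) (hk : k < t) : ((u + k) % t + t - u) % t = k := by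
  have ht : 0 < t := by omega
  have h1 : (u + k) % t + t - u = (u + k) % t + (t - u) := by omega
  rw [h1, Nat.mod_add_mod]
  have h2 : u + k + (t - u) = t + k := by omega
  rw [h2, Nat.add_mod_left, Nat.mod_eq_of_lt hk]

lemma modH2 {u i : ℕ} (hu : u < t) (hi : i < t) : (u + (i + t - u) % t) % t = i := by
  have ht : 0 < t := by omega
  have h0 : (u + (i + t - u) % t) % t = (u + (i + t - u)) % t := by
    conv_lhs => rw [Nat.add_mod]
    conv_rhs => rw [Nat.add_mod]
    rw [Nat.mod_mod_of_dvd _ dvd_rfl]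
  rw [h0]
  have h1 : u + (i + t - u) = i + t := by omega
  rw [h1, Nat.add_mod_right, Nat.mod_eq_of_lt hi]


/-! ### coprimality lemmas on cut positions -/

section Cut
variable {s t : ℕ}

lemma cut_lt (ht : 0 < t) (nn : ℕ) : nn * s % t < t := Nat.mod_lt _ (by omega)

lemma cut_ne_zero (hgcd : Nat.gcd s t = 1) {nn : ℕ} (h1 : 1 ≤ nn) (h2 : nn < t) : nn * s % t ≠ 0 := by
  intro h
  have hdvd : t ∣ nn * s := Nat.dvd_of_mod_eq_zero h
  have hco : Nat.Coprime t s := Nat.coprime_comm.mp hgcd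
  have : t ∣ nn := hco.dvd_of_dvd_mul_right hdvd
  have := Nat.le_of_dvd (by omega) this
  omega

lemma cut_inj (hgcd : Nat.gcd s t = 1) {nn nn' : ℕ} (h1 : 1 ≤ nn) (h2 : nn < t) (h1' : 1 ≤ nn') (h2' : nn' < t)
    (heq : nn * s % t = nn' * s % t) : nn = nn' := by
  have hmod : nn * s ≡ nn' * s [MOD t] := heq
  have := Nat.ModEq.cancel_right_of_coprime (c := s) (by rw [Nat.gcd_comm]; exact hgcd) hmod
  have h3 : nn % t = nn' % t := this
  rw [Nat.mod_eq_of_lt h2, Nat.mod_eq_of_lt h2'] at h3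
  exact h3

lemma cut_surj (hgcd : Nat.gcd s t = 1) {p : ℕ} (hp1 : 1 ≤ p) (hp2 : p < t) :
    ∃ nn, 1 ≤ nn ∧ nn < t ∧ nn * s % t = p := by
  haveI : NeZero t := ⟨by omega⟩
  set u : (ZMod t)ˣ := ZMod.unitOfCoprime s hgcd with hu
  set z : ZMod t := (p : ZMod t) * (↑u⁻¹ : (ZMod t)ˣ) with hz
  have key : ((z.val * s : ℕ) : ZMod t) = (p : ZMod t) := by
    push_cast
    rw [ZMod.natCast_zmod_val]
    have hsu : ((s : ℕ) : ZMod t) = (u : ZMod t) := (ZMod.coe_unitOfCoprime s hgcd).symm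
    rw [hz, hsu, mul_assoc]
    simp
  have hval : z.val * s % t = p := by
    have := congrArg ZMod.val key
    rwa [ZMod.val_natCast, ZMod.val_natCast_of_lt hp2] at this
  refine ⟨z.val, ?_, ZMod.val_lt _, hval⟩
  rcases Nat.eq_zero_or_pos z.val with h0 | h1
  · exfalso
    rw [h0, Nat.zero_mul, Nat.zero_mod] at hval
    omega
  · exact h1

end Cut


/-! ### segments -/

def SEG (t u len : ℕ) : Finset (Fin t) :=
  Finset.univ.filter fun i => ((i : ℕ) + t - u) % t < len

lemma mem_SEG {t u len : ℕ} {i : Fin t} :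
    i ∈ SEG t u len ↔ ((i : ℕ) + t - u) % t < len := by
  simp [SEG]

lemma SEG_eq {t u len : ℕ} (hu : u < t) (hlen : len ≤ t) :
    SEG t u len = (Finset.range len).image
      (fun k => (⟨(u + k) % t, Nat.mod_lt _ (by omega)⟩ : Fin t)) := by
  ext ⟨i, hi⟩
  simp only [mem_SEG, Finset.mem_image, Finset.mem_range]
  constructor
  · intro hmem
    exact ⟨(i + t - u) % t, hmem, by
      apply Fin.ext
      exact modH2 t hu hi⟩
  · rintro ⟨k, hk, hki⟩
    have hk' : k < t := by omega
    have hval : (u + k) % t = i := congrArg Fin.val hki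
    rw [← hval, modH1 t hu hk']
    exact hk

lemma card_SEG {t u len : ℕ} (hu : u < t) (hlen : len ≤ t) :
    (SEG t u len).card = len := by
  rw [SEG_eq hu hlen, Finset.card_image_of_injOn, Finset.card_range]
  intro k hk k' hk' heq
  simp only [Finset.coe_range, Set.mem_Iio] at hk hk'
  have h1 : (u + k) % t = (u + k') % t := congrArg Fin.val heq
  have h2 : ((u + k) % t + t - u) % t = k := modH1 t hu (by omega)
  have h3 : ((u + k') % t + t - u) % t = k' := modH1 t hu (by omega)
  rw [h1] at h2
  omega

/-! ### the removal sequence -/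

variable [NeZero t] [NeZero (s - 1)]

def f (n : ℕ) : Sym2 (Vt s t) :=
  if n = 0 then s(vb s t, aa s t (t-1))
  else if n = 1 then s(va s t, vb s t)
  else if n < t + 1 then s(aa s t ((n-1)*s % t - 1), aa s t ((n-1)*s % t))
  else if n < 2*t + 1 then s(va s t, aa s t (n - (t+1)))
  else if n < 2*t + s - 1 then s(ba s t (n - (2*t+1)), ba s t (n - 2*t))
  else s(vb s t, ba s t (n - (2*t + s - 1)))

lemma f_eq0 : f s t 0 = s(vb s t, aa s t (t-1)) := by simp [f]

lemma f_eq1 : f s t 1 = s(va s t, vb s t) := by simp [f]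

lemma f_eq_cut {n : ℕ} (h2 : 2 ≤ n) (hn : n < t + 1) :
    f s t n = s(aa s t ((n-1)*s % t - 1), aa s t ((n-1)*s % t)) := by
  simp only [f]
  rw [if_neg (show ¬ (n = 0) by omega), if_neg (show ¬ (n = 1) by omega), if_pos hn]

lemma f_eq_spokeA {n : ℕ} (h1 : t + 1 ≤ n) (hn : n < 2*t + 1) :
    f s t n = s(va s t, aa s t (n - (t+1))) := by
  simp only [f]
  rw [if_neg (show ¬ (n = 0) by omega), if_neg (show ¬ (n = 1) by omega),
    if_neg (show ¬ (n < t + 1) by omega), if_pos hn]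

lemma f_eq_pathB {n : ℕ} (h1 : 2*t + 1 ≤ n) (hn : n < 2*t + s - 1) (ht : 0 < t) :
    f s t n = s(ba s t (n - (2*t+1)), ba s t (n - 2*t)) := by
  simp only [f]
  rw [if_neg (show ¬ (n = 0) by omega), if_neg (show ¬ (n = 1) by omega),
    if_neg (show ¬ (n < t + 1) by omega), if_neg (show ¬ (n < 2*t + 1) by omega), if_pos hn]

lemma f_eq_spokeB {n : ℕ} (h1 : 2*t + s - 1 ≤ n) (ht : 0 < t) (hs : 2 ≤ s) :
    f s t n = s(vb s t, ba s t (n - (2*t + s - 1))) := by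
  simp only [f]
  rw [if_neg (show ¬ (n = 0) by omega), if_neg (show ¬ (n = 1) by omega),
    if_neg (show ¬ (n < t + 1) by omega), if_neg (show ¬ (n < 2*t + 1) by omega),
    if_neg (show ¬ (n < 2*t + s - 1) by omega)]

def R (n : ℕ) : Set (Sym2 (Vt s t)) := f s t '' Set.Iio n

lemma mem_R {n : ℕ} {e : Sym2 (Vt s t)} : e ∈ R s t n ↔ ∃ i < n, f s t i = e := by
  simp [R]

lemma R_succ (n : ℕ) : R s t (n+1) = R s t n ∪ {f s t n} := by
  rw [R, R]
  have h : Set.Iio (n+1) = insert n (Set.Iio n) := by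
    ext k
    simp only [Set.mem_Iio, Set.mem_insert_iff]
    omega
  rw [h, Set.image_insert_eq, Set.union_singleton]

/-! ### generic erase step -/

lemma eraseStep_of {W : Type*} [Fintype W] [DecidableEq W] {G : SimpleGraph W}
    {R : Set (Sym2 W)} {e : Sym2 W} {s t : ℕ}
    (hcard : Fintype.card W = s + t + 1)
    (V1 : Finset W) (v : W) (hv1 : v ∉ V1) (h1 : V1.card = s)
    (he : e ∈ G.edgeSet) (heR : e ∉ R)
    (hxy : ∃ x ∈ V1, ∃ y, y ∉ V1 ∧ y ≠ v ∧ e = s(x, y))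
    (huniq : ∀ x ∈ V1, ∀ y, y ∉ V1 → y ≠ v → G.Adj x y → s(x, y) = e ∨ s(x, y) ∈ R) :
    EraseStep s t (G.deleteEdges R) (G.deleteEdges (R ∪ {e})) := by
  refine ⟨e, ?_, ?_, ↑V1, ↑((V1 ∪ {v})ᶜ), v, ?_, ?_, ?_, ?_, ?_, ?_, ?_, ?_⟩
  · rw [edgeSet_deleteEdges]
    exact ⟨he, heR⟩
  · rw [edgeSet_deleteEdges, edgeSet_deleteEdges, Set.diff_diff]
  · exact Finset.disjoint_coe.mpr
      (disjoint_compl_right.mono_left Finset.subset_union_left)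
  · exact_mod_cast hv1
  · simp
  · ext w
    simp only [Set.mem_union, Finset.coe_compl, Set.mem_compl_iff, Finset.mem_coe,
      Finset.mem_union, Finset.mem_singleton, Set.mem_singleton_iff, Set.mem_univ, iff_true]
    tauto
  · rw [Set.ncard_coe_finset, h1]
  · rw [Set.ncard_coe_finset, Finset.card_compl, hcard,
      Finset.card_union_of_disjoint (by simpa using hv1), h1, Finset.card_singleton]
    omega
  · obtain ⟨x, hx, y, hy1, hy2, hexy⟩ := hxy
    refine ⟨x, hx, y, ?_, hexy⟩
    simp [hy1, hy2]
  · intro x hx y hy hadj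
    simp only [Finset.coe_compl, Set.mem_compl_iff, Finset.mem_coe, Finset.mem_union,
      Finset.mem_singleton] at hy
    push_neg at hy
    rw [deleteEdges_adj] at hadj
    rcases huniq x hx y hy.1 hy.2 hadj.1 with h | h
    · exact h
    · exact absurd h hadj.2


lemma f_ne_f (hs : 2 < s) (hst : s < t) (hgcd : Nat.gcd s t = 1) {i j : ℕ}
    (hij : i < j) (hj : j < 2*t + 2*s - 2) : f s t i ≠ f s t j := by
  have ht : 0 < t := by omega
  have hmod1 : (t - 1) % t = t - 1 := Nat.mod_eq_of_lt (by omega)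
  rcases (show i = 0 ∨ i = 1 ∨ (2 ≤ i ∧ i < t+1) ∨ (t+1 ≤ i ∧ i < 2*t+1) ∨
      (2*t+1 ≤ i ∧ i < 2*t+s-1) ∨ (2*t+s-1 ≤ i) from by omega) with
    hi0 | hi1 | ⟨hia, hib⟩ | ⟨hia, hib⟩ | ⟨hia, hib⟩ | hia <;>
  rcases (show j = 0 ∨ j = 1 ∨ (2 ≤ j ∧ j < t+1) ∨ (t+1 ≤ j ∧ j < 2*t+1) ∨
      (2*t+1 ≤ j ∧ j < 2*t+s-1) ∨ (2*t+s-1 ≤ j) from by omega) with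
    hj0 | hj1 | ⟨hja, hjb⟩ | ⟨hja, hjb⟩ | ⟨hja, hjb⟩ | hja
  -- i = 0
  · omega
  · subst hi0 hj1
    rw [f_eq0, f_eq1]
    intro h
    rw [Sym2.eq_iff] at h
    simp [va, vb, aa, ba] at h
  · subst hi0
    rw [f_eq0, f_eq_cut s t hja hjb]
    intro h
    rw [Sym2.eq_iff] at h
    simp [va, vb, aa, ba] at h
  · subst hi0
    rw [f_eq0, f_eq_spokeA s t hja hjb]
    intro h
    rw [Sym2.eq_iff] at h
    simp [va, vb, aa, ba] at h
  · subst hi0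
    rw [f_eq0, f_eq_pathB s t hja hjb ht]
    intro h
    rw [Sym2.eq_iff] at h
    simp [va, vb, aa, ba] at h
  · subst hi0
    rw [f_eq0, f_eq_spokeB s t hja ht (by omega)]
    intro h
    rw [Sym2.eq_iff] at h
    simp [va, vb, aa, ba] at h
  -- i = 1
  · omega
  · omega
  · subst hi1
    rw [f_eq1, f_eq_cut s t hja hjb]
    intro h
    rw [Sym2.eq_iff] at h
    simp [va, vb, aa, ba] at h
  · subst hi1
    rw [f_eq1, f_eq_spokeA s t hja hjb]
    intro h
    rw [Sym2.eq_iff] at h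
    simp [va, vb, aa, ba] at h
  · subst hi1
    rw [f_eq1, f_eq_pathB s t hja hjb ht]
    intro h
    rw [Sym2.eq_iff] at h
    simp [va, vb, aa, ba] at h
  · subst hi1
    rw [f_eq1, f_eq_spokeB s t hja ht (by omega)]
    intro h
    rw [Sym2.eq_iff] at h
    simp [va, vb, aa, ba] at h
  -- i in cut phase
  · omega
  · omega
  · -- both cut phase: the real case
    rw [f_eq_cut s t hia hib, f_eq_cut s t hja hjb]
    intro h
    rw [Sym2.eq_iff] at h
    have hpq1 : 1 ≤ (i-1)*s % t := Nat.one_le_iff_ne_zero.mpr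
      (cut_ne_zero hgcd (by omega) (by omega))
    have hpq2 : 1 ≤ (j-1)*s % t := Nat.one_le_iff_ne_zero.mpr
      (cut_ne_zero hgcd (by omega) (by omega))
    have hlt1 : (i-1)*s % t < t := Nat.mod_lt _ ht
    have hlt2 : (j-1)*s % t < t := Nat.mod_lt _ ht
    simp [va, vb, aa, ba, Fin.ext_iff,
      Nat.mod_eq_of_lt (show (i-1)*s % t - 1 < t by omega),
      Nat.mod_eq_of_lt (show (j-1)*s % t - 1 < t by omega),
      Nat.mod_eq_of_lt hlt1, Nat.mod_eq_of_lt hlt2] at h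
    have : (i-1)*s % t = (j-1)*s % t := by omega
    have := cut_inj hgcd (show 1 ≤ i - 1 by omega) (show i - 1 < t by omega)
      (show 1 ≤ j - 1 by omega) (show j - 1 < t by omega) this
    omega
  · rw [f_eq_cut s t hia hib, f_eq_spokeA s t hja hjb]
    intro h
    rw [Sym2.eq_iff] at h
    simp [va, vb, aa, ba] at h
  · rw [f_eq_cut s t hia hib, f_eq_pathB s t hja hjb ht]
    intro h
    rw [Sym2.eq_iff] at h
    simp [va, vb, aa, ba] at h
  · rw [f_eq_cut s t hia hib, f_eq_spokeB s t hja ht (by omega)]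
    intro h
    rw [Sym2.eq_iff] at h
    simp [va, vb, aa, ba] at h
  -- i in spokeA phase
  · omega
  · omega
  · omega
  · rw [f_eq_spokeA s t hia hib, f_eq_spokeA s t hja hjb]
    intro h
    rw [Sym2.eq_iff] at h
    simp [va, vb, aa, ba, Fin.ext_iff,
      Nat.mod_eq_of_lt (show i - (t+1) < t by omega),
      Nat.mod_eq_of_lt (show j - (t+1) < t by omega)] at h
    omega
  · rw [f_eq_spokeA s t hia hib, f_eq_pathB s t hja hjb ht]
    intro h
    rw [Sym2.eq_iff] at h
    simp [va, vb, aa, ba] at h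
  · rw [f_eq_spokeA s t hia hib, f_eq_spokeB s t hja ht (by omega)]
    intro h
    rw [Sym2.eq_iff] at h
    simp [va, vb, aa, ba] at h
  -- i in pathB phase
  · omega
  · omega
  · omega
  · omega
  · rw [f_eq_pathB s t hia hib ht, f_eq_pathB s t hja hjb ht]
    intro h
    rw [Sym2.eq_iff] at h
    simp [va, vb, aa, ba, Fin.ext_iff,
      Nat.mod_eq_of_lt (show i - (2*t+1) < s - 1 by omega),
      Nat.mod_eq_of_lt (show j - (2*t+1) < s - 1 by omega),
      Nat.mod_eq_of_lt (show i - 2*t < s - 1 by omega),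
      Nat.mod_eq_of_lt (show j - 2*t < s - 1 by omega)] at h
    omega
  · rw [f_eq_pathB s t hia hib ht, f_eq_spokeB s t hja ht (by omega)]
    intro h
    rw [Sym2.eq_iff] at h
    simp [va, vb, aa, ba] at h
  -- i in spokeB phase
  · omega
  · omega
  · omega
  · omega
  · omega
  · rw [f_eq_spokeB s t hia ht (by omega), f_eq_spokeB s t hja ht (by omega)]
    intro h
    rw [Sym2.eq_iff] at h
    simp [va, vb, aa, ba, Fin.ext_iff,
      Nat.mod_eq_of_lt (show i - (2*t+s-1) < s - 1 by omega),
      Nat.mod_eq_of_lt (show j - (2*t+s-1) < s - 1 by omega)] at h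
    omega


lemma pathA_mem_f (hs : 2 < s) (hst : s < t) (hgcd : Nat.gcd s t = 1) (i j : Fin t)
    (hij : (i : ℕ) + 1 = j) :
    ∃ n, 2 ≤ n ∧ n < t + 1 ∧ f s t n = s(Sum.inl i, Sum.inl j) := by
  have ht : 0 < t := by omega
  obtain ⟨nn, h1, h2, h3⟩ := cut_surj hgcd (p := (j : ℕ)) (by omega) j.isLt
  have hj : (j : ℕ) < t := j.isLt
  refine ⟨nn + 1, by omega, by omega, ?_⟩
  rw [f_eq_cut s t (by omega) (by omega), Nat.add_sub_cancel, h3]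
  have e1 : aa s t ((j : ℕ) - 1) = (Sum.inl i : Vt s t) := by
    rw [aa]
    exact congrArg Sum.inl (Fin.ext (by
      show ((j : ℕ) - 1) % t = (i : ℕ)
      rw [Nat.mod_eq_of_lt (by omega)]
      omega))
  have e2 : aa s t ((j : ℕ)) = (Sum.inl j : Vt s t) := by
    rw [aa]
    exact congrArg Sum.inl (Fin.ext (by
      show ((j : ℕ)) % t = (j : ℕ)
      rw [Nat.mod_eq_of_lt hj]))
  rw [e1, e2]

lemma pathB_edge (hs : 2 < s) (hst : s < t) (bi bj : Fin (s - 1))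
    (hij : (bi : ℕ) + 1 = bj) :
    f s t (2*t + 1 + (bi : ℕ)) = s(Sum.inr (Sum.inl bi), Sum.inr (Sum.inl bj)) := by
  have ht : 0 < t := by omega
  have hbj : (bj : ℕ) < s - 1 := bj.isLt
  rw [f_eq_pathB s t (by omega) (by omega) ht]
  have e1 : ba s t (2*t + 1 + (bi : ℕ) - (2*t+1)) = (Sum.inr (Sum.inl bi) : Vt s t) := by
    rw [ba]
    refine congrArg (fun z => Sum.inr (Sum.inl z)) (Fin.ext ?_)
    show (2*t + 1 + (bi : ℕ) - (2*t+1)) % (s-1) = (bi : ℕ)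
    have h : 2*t + 1 + (bi : ℕ) - (2*t+1) = (bi : ℕ) := by omega
    rw [h, Nat.mod_eq_of_lt bi.isLt]
  have e2 : ba s t (2*t + 1 + (bi : ℕ) - 2*t) = (Sum.inr (Sum.inl bj) : Vt s t) := by
    rw [ba]
    refine congrArg (fun z => Sum.inr (Sum.inl z)) (Fin.ext ?_)
    show (2*t + 1 + (bi : ℕ) - 2*t) % (s-1) = (bj : ℕ)
    have h : 2*t + 1 + (bi : ℕ) - 2*t = (bj : ℕ) := by omega
    rw [h, Nat.mod_eq_of_lt hbj]
  rw [e1, e2]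

lemma pathB_mem_f (hs : 2 < s) (hst : s < t) (bi bj : Fin (s - 1))
    (hij : (bi : ℕ) + 1 = bj) :
    ∃ n, 2*t + 1 ≤ n ∧ n < 2*t + s - 1 ∧
      f s t n = s(Sum.inr (Sum.inl bi), Sum.inr (Sum.inl bj)) := by
  have ht : 0 < t := by omega
  have hbj : (bj : ℕ) < s - 1 := bj.isLt
  refine ⟨2*t + 1 + (bi : ℕ), by omega, by omega, ?_⟩
  rw [f_eq_pathB s t (by omega) (by omega) ht]
  have e1 : ba s t (2*t + 1 + (bi : ℕ) - (2*t+1)) = (Sum.inr (Sum.inl bi) : Vt s t) := by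
    rw [ba]
    refine congrArg (fun z => Sum.inr (Sum.inl z)) (Fin.ext ?_)
    show (2*t + 1 + (bi : ℕ) - (2*t+1)) % (s-1) = (bi : ℕ)
    have h : 2*t + 1 + (bi : ℕ) - (2*t+1) = (bi : ℕ) := by omega
    rw [h, Nat.mod_eq_of_lt bi.isLt]
  have e2 : ba s t (2*t + 1 + (bi : ℕ) - 2*t) = (Sum.inr (Sum.inl bj) : Vt s t) := by
    rw [ba]
    refine congrArg (fun z => Sum.inr (Sum.inl z)) (Fin.ext ?_)
    show (2*t + 1 + (bi : ℕ) - 2*t) % (s-1) = (bj : ℕ)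
    have h : 2*t + 1 + (bi : ℕ) - 2*t = (bj : ℕ) := by omega
    rw [h, Nat.mod_eq_of_lt hbj]
  rw [e1, e2]

lemma spokeA_mem_f (ht : 0 < t) (i : Fin t) :
    f s t (t + 1 + (i : ℕ)) = s(va s t, Sum.inl i) := by
  rw [f_eq_spokeA s t (by omega) (by have := i.isLt; omega)]
  have e1 : aa s t (t + 1 + (i : ℕ) - (t+1)) = (Sum.inl i : Vt s t) := by
    rw [aa]
    refine congrArg Sum.inl (Fin.ext ?_)
    show (t + 1 + (i : ℕ) - (t+1)) % t = (i : ℕ)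
    have h : t + 1 + (i : ℕ) - (t+1) = (i : ℕ) := by omega
    rw [h, Nat.mod_eq_of_lt i.isLt]
  rw [e1]

lemma spokeB_mem_f (hs : 2 < s) (hst : s < t) (bj : Fin (s - 1)) :
    f s t (2*t + s - 1 + (bj : ℕ)) = s(vb s t, Sum.inr (Sum.inl bj)) := by
  have ht : 0 < t := by omega
  rw [f_eq_spokeB s t (by omega) ht (by omega)]
  have e1 : ba s t (2*t + s - 1 + (bj : ℕ) - (2*t + s - 1)) = (Sum.inr (Sum.inl bj) : Vt s t) := by
    rw [ba]
    refine congrArg (fun z => Sum.inr (Sum.inl z)) (Fin.ext ?_)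
    show (2*t + s - 1 + (bj : ℕ) - (2*t + s - 1)) % (s-1) = (bj : ℕ)
    have h : 2*t + s - 1 + (bj : ℕ) - (2*t + s - 1) = (bj : ℕ) := by omega
    rw [h, Nat.mod_eq_of_lt bj.isLt]
  rw [e1]


lemma adj_mem_f (hs : 2 < s) (hst : s < t) (hgcd : Nat.gcd s t = 1) {x y : Vt s t}
    (h : (CoprimeGraph s t).Adj x y) : ∃ n, n < 2*t + 2*s - 2 ∧ f s t n = s(x, y) := by
  have ht : 0 < t := by omega
  rw [CoprimeGraph, fromRel_adj] at h
  obtain ⟨hne, hr⟩ := h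
  rcases x with i | bi | ki <;> rcases y with j | bj | kj
  · -- A-A
    rcases hr with h1 | h1
    · obtain ⟨n, hn1, hn2, hn3⟩ := pathA_mem_f s t hs hst hgcd i j h1
      exact ⟨n, by omega, hn3⟩
    · obtain ⟨n, hn1, hn2, hn3⟩ := pathA_mem_f s t hs hst hgcd j i h1
      exact ⟨n, by omega, by rw [hn3, Sym2.eq_swap]⟩
  · rcases hr with h1 | h1 <;> exact h1.elim
  · -- A - hub
    rcases hr with h1 | h1
    · exact h1.elim
    rcases h1 with h1 | ⟨h1, h2⟩
    · have hy : (Sum.inr (Sum.inr kj) : Vt s t) = va s t := by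
        rw [va]
        exact congrArg (fun z => Sum.inr (Sum.inr z)) (Fin.ext (by simpa using h1))
      refine ⟨t + 1 + (i : ℕ), by have := i.isLt; omega, ?_⟩
      rw [spokeA_mem_f s t ht i, hy, Sym2.eq_swap]
    · have hy : (Sum.inr (Sum.inr kj) : Vt s t) = vb s t := by
        rw [vb]
        exact congrArg (fun z => Sum.inr (Sum.inr z)) (Fin.ext (by simpa using h1))
      have hx : (Sum.inl i : Vt s t) = aa s t (t - 1) := by
        rw [aa]
        exact congrArg Sum.inl (Fin.ext (by
          show (i : ℕ) = (t-1) % t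
          rw [Nat.mod_eq_of_lt (by omega)]
          exact h2))
      refine ⟨0, by omega, ?_⟩
      rw [f_eq0, hy, hx, Sym2.eq_swap]
  · rcases hr with h1 | h1 <;> exact h1.elim
  · -- B - B
    rcases hr with h1 | h1
    · obtain ⟨n, hn1, hn2, hn3⟩ := pathB_mem_f s t hs hst bi bj h1
      exact ⟨n, by omega, hn3⟩
    · obtain ⟨n, hn1, hn2, hn3⟩ := pathB_mem_f s t hs hst bj bi h1
      exact ⟨n, by omega, by rw [hn3, Sym2.eq_swap]⟩
  · -- B - hub
    rcases hr with h1 | h1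
    · exact h1.elim
    have hy : (Sum.inr (Sum.inr kj) : Vt s t) = vb s t := by
      rw [vb]
      exact congrArg (fun z => Sum.inr (Sum.inr z)) (Fin.ext (by simpa using h1))
    refine ⟨2*t + s - 1 + (bi : ℕ), by have := bi.isLt; omega, ?_⟩
    rw [spokeB_mem_f s t hs hst bi, hy, Sym2.eq_swap]
  · -- hub - A
    rcases hr with h1 | h1
    · rcases h1 with h1 | ⟨h1, h2⟩
      · have hx : (Sum.inr (Sum.inr ki) : Vt s t) = va s t := by
          rw [va]
          exact congrArg (fun z => Sum.inr (Sum.inr z)) (Fin.ext (by simpa using h1))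
        refine ⟨t + 1 + (j : ℕ), by have := j.isLt; omega, ?_⟩
        rw [spokeA_mem_f s t ht j, hx]
      · have hx : (Sum.inr (Sum.inr ki) : Vt s t) = vb s t := by
          rw [vb]
          exact congrArg (fun z => Sum.inr (Sum.inr z)) (Fin.ext (by simpa using h1))
        have hy : (Sum.inl j : Vt s t) = aa s t (t - 1) := by
          rw [aa]
          exact congrArg Sum.inl (Fin.ext (by
            show (j : ℕ) = (t-1) % t
            rw [Nat.mod_eq_of_lt (by omega)]
            exact h2))
        refine ⟨0, by omega, ?_⟩
        rw [f_eq0, hx, hy]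
    · exact h1.elim
  · -- hub - B
    rcases hr with h1 | h1
    · have hx : (Sum.inr (Sum.inr ki) : Vt s t) = vb s t := by
        rw [vb]
        exact congrArg (fun z => Sum.inr (Sum.inr z)) (Fin.ext (by simpa using h1))
      refine ⟨2*t + s - 1 + (bj : ℕ), by have := bj.isLt; omega, ?_⟩
      rw [spokeB_mem_f s t hs hst bj, hx]
    · exact h1.elim
  · -- hub - hub
    rcases hr with ⟨h1, h2⟩ | ⟨h1, h2⟩
    · have hx : (Sum.inr (Sum.inr ki) : Vt s t) = va s t := by
        rw [va]
        exact congrArg (fun z => Sum.inr (Sum.inr z)) (Fin.ext (by simpa using h1))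
      have hy : (Sum.inr (Sum.inr kj) : Vt s t) = vb s t := by
        rw [vb]
        exact congrArg (fun z => Sum.inr (Sum.inr z)) (Fin.ext (by simpa using h2))
      refine ⟨1, by omega, ?_⟩
      rw [f_eq1, hx, hy]
    · have hx : (Sum.inr (Sum.inr ki) : Vt s t) = vb s t := by
        rw [vb]
        exact congrArg (fun z => Sum.inr (Sum.inr z)) (Fin.ext (by simpa using h2))
      have hy : (Sum.inr (Sum.inr kj) : Vt s t) = va s t := by
        rw [va]
        exact congrArg (fun z => Sum.inr (Sum.inr z)) (Fin.ext (by simpa using h1))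
      refine ⟨1, by omega, ?_⟩
      rw [f_eq1, hx, hy, Sym2.eq_swap]


def bpathF : Finset (Vt s t) := Finset.univ.image (fun j : Fin (s-1) => Sum.inr (Sum.inl j))

def BF : Finset (Vt s t) := insert (vb s t) (bpathF s t)

lemma mem_bpathF {x : Vt s t} : x ∈ bpathF s t ↔ ∃ bj : Fin (s-1), x = Sum.inr (Sum.inl bj) := by
  simp [bpathF, eq_comm]

lemma mem_BF_iff {x : Vt s t} :
    x ∈ BF s t ↔ x = vb s t ∨ ∃ bj : Fin (s-1), x = Sum.inr (Sum.inl bj) := by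
  simp [BF, mem_bpathF]

lemma inl_not_mem_BF (i : Fin t) : (Sum.inl i : Vt s t) ∉ BF s t := by
  simp [mem_BF_iff, vb]

lemma va_not_mem_BF : va s t ∉ BF s t := by
  simp [mem_BF_iff, va, vb]

lemma vb_mem_BF : vb s t ∈ BF s t := by simp [BF]

lemma binl_mem_BF (bj : Fin (s-1)) : (Sum.inr (Sum.inl bj) : Vt s t) ∈ BF s t := by
  simp [mem_BF_iff]

lemma card_BF (hs : 1 ≤ s) : (BF s t).card = s := by
  rw [BF, Finset.card_insert_of_notMem (by simp [bpathF, vb]), bpathF,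
    Finset.card_image_of_injective _ (fun a b hab => by simpa using hab)]
  simp
  omega

lemma card_Vt : Fintype.card (Vt s t) = t + (s - 1) + 2 := by
  simp [Vt]
  omega

lemma hub_cases (k : Fin 2) :
    (Sum.inr (Sum.inr k) : Vt s t) = va s t ∨ (Sum.inr (Sum.inr k) : Vt s t) = vb s t := by
  rcases (show (k : ℕ) = 0 ∨ (k : ℕ) = 1 from by have := k.isLt; omega) with h | h
  · exact Or.inl (by
      rw [va]
      exact congrArg (fun z => Sum.inr (Sum.inr z)) (Fin.ext (by simpa using h)))
  · exact Or.inr (by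
      rw [vb]
      exact congrArg (fun z => Sum.inr (Sum.inr z)) (Fin.ext (by simpa using h)))

lemma inl_eq_aa {i : Fin t} {m : ℕ} (hm : m < t) (him : (i : ℕ) = m) :
    (Sum.inl i : Vt s t) = aa s t m := by
  rw [aa]
  refine congrArg Sum.inl (Fin.ext ?_)
  show (i : ℕ) = m % t
  rw [Nat.mod_eq_of_lt hm]
  exact him

lemma step0 (hs : 2 < s) (hst : s < t) (hgcd : Nat.gcd s t = 1) :
    EraseStep s t ((CoprimeGraph s t).deleteEdges (R s t 0))
      ((CoprimeGraph s t).deleteEdges (R s t 0 ∪ {f s t 0})) := by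
  have ht : 0 < t := by omega
  apply eraseStep_of (by rw [card_Vt]; omega) (BF s t) (va s t) (va_not_mem_BF s t)
    (card_BF s t (by omega))
  · -- f 0 is an edge
    rw [f_eq0, mem_edgeSet]
    exact ((adj_Avb_iff s t _).mpr (by
      show (t-1) % t = t - 1
      exact Nat.mod_eq_of_lt (by omega))).symm
  · -- not yet removed
    rw [mem_R]
    rintro ⟨i, hi, -⟩
    omega
  · -- endpoints
    refine ⟨vb s t, vb_mem_BF s t, aa s t (t-1), ?_, ?_, by rw [f_eq0]⟩
    · rw [aa]
      exact inl_not_mem_BF s t _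
    · rw [aa, va]
      simp
  · -- uniqueness
    intro x hx y hy hyv hadj
    rw [mem_BF_iff] at hx
    rcases hx with hx | ⟨bi, hx⟩
    · subst hx
      rcases y with j | bj | k
      · left
        have : (Sum.inl j : Vt s t) = aa s t (t-1) :=
          inl_eq_aa s t (by omega) ((adj_Avb_iff s t j).mp hadj.symm)
        rw [f_eq0, this]
      · exact absurd (binl_mem_BF s t bj) hy
      · rcases hub_cases s t k with h | h
        · exact absurd h hyv
        · exact absurd (h ▸ hadj.ne) (by simp)
    · subst hx
      rcases y with j | bj | k
      · exact absurd hadj ((adj_AB_iff s t j bi) ∘ SimpleGraph.Adj.symm)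
      · exact absurd (binl_mem_BF s t bj) hy
      · rcases hub_cases s t k with h | h
        · rw [h] at hadj
          exact absurd hadj (adj_Bva s t bi)
        · rw [h] at hy
          exact absurd (vb_mem_BF s t) hy

lemma step1 (hs : 2 < s) (hst : s < t) (hgcd : Nat.gcd s t = 1) :
    EraseStep s t ((CoprimeGraph s t).deleteEdges (R s t 1))
      ((CoprimeGraph s t).deleteEdges (R s t 1 ∪ {f s t 1})) := by
  have ht : 0 < t := by omega
  apply eraseStep_of (by rw [card_Vt]; omega) (BF s t) (aa s t 0)
    (by rw [aa]; exact inl_not_mem_BF s t _) (card_BF s t (by omega))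
  · rw [f_eq1, mem_edgeSet]
    exact (adj_vavb s t)
  · rw [mem_R]
    rintro ⟨i, hi, hfi⟩
    have hi0 : i = 0 := by omega
    subst hi0
    rw [f_eq0, f_eq1] at hfi
    rw [Sym2.eq_iff] at hfi
    simp [va, vb, aa] at hfi
  · refine ⟨vb s t, vb_mem_BF s t, va s t, va_not_mem_BF s t, ?_, by rw [f_eq1, Sym2.eq_swap]⟩
    rw [va, aa]
    simp
  · intro x hx y hy hyv hadj
    rw [mem_BF_iff] at hx
    rcases hx with hx | ⟨bi, hx⟩
    · subst hx
      rcases y with j | bj | k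
      · -- vb adjacent to a_j : j = t-1, removed at step 0
        right
        rw [mem_R]
        refine ⟨0, by omega, ?_⟩
        have : (Sum.inl j : Vt s t) = aa s t (t-1) :=
          inl_eq_aa s t (by omega) ((adj_Avb_iff s t j).mp hadj.symm)
        rw [f_eq0, this, Sym2.eq_swap]
      · exact absurd (binl_mem_BF s t bj) hy
      · rcases hub_cases s t k with h | h
        · left
          rw [f_eq1, h, Sym2.eq_swap]
        · exact absurd (h ▸ hadj.ne) (by simp)
    · subst hx
      rcases y with j | bj | k
      · exact absurd hadj ((adj_AB_iff s t j bi) ∘ SimpleGraph.Adj.symm)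
      · exact absurd (binl_mem_BF s t bj) hy
      · rcases hub_cases s t k with h | h
        · rw [h] at hadj
          exact absurd hadj (adj_Bva s t bi)
        · rw [h] at hy
          exact absurd (vb_mem_BF s t) hy


section Boundary

variable {s t u : ℕ}

lemma cutpos_split (hu : u < t) (hst : s < t) :
    ((u + s) % t = u + s ∧ u + s < t) ∨ ((u + s) % t = u + s - t ∧ t ≤ u + s) := by
  rcases lt_or_ge (u + s) t with h | h
  · exact Or.inl ⟨Nat.mod_eq_of_lt h, h⟩
  · refine Or.inr ⟨?_, h⟩
    rw [Nat.mod_eq_sub_mod h, Nat.mod_eq_of_lt (by omega)]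

lemma ep1 (hs : 0 < s) (hst : s < t) (hu : u < t) (hp1 : 1 ≤ (u + s) % t) :
    ((u + s) % t - 1 + t - u) % t = s - 1 := by
  rcases cutpos_split hu hst with ⟨he, hlt⟩ | ⟨he, hge⟩ <;> rw [he] <;> rw [he] at hp1
  · rw [show u + s - 1 + t - u = s - 1 + t from by omega, Nat.add_mod_right,
      Nat.mod_eq_of_lt (by omega)]
  · rw [show u + s - t - 1 + t - u = s - 1 from by omega]
    exact Nat.mod_eq_of_lt (by omega)

lemma ep2 (hs : 0 < s) (hst : s < t) (hu : u < t) :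
    ((u + s) % t + t - u) % t = s := by
  rcases cutpos_split hu hst with ⟨he, hlt⟩ | ⟨he, hge⟩ <;> rw [he]
  · rw [show u + s + t - u = s + t from by omega, Nat.add_mod_right, Nat.mod_eq_of_lt hst]
  · rw [show u + s - t + t - u = s from by omega]
    exact Nat.mod_eq_of_lt hst

lemma bd1 {i j : ℕ} (hs : 0 < s) (hst : s < t) (hu : u < t) (hi : i < t) (hj : j < t)
    (hiS : (i + t - u) % t < s) (hjS : ¬ ((j + t - u) % t < s)) (hij : i + 1 = j) :
    j = (u + s) % t := by
  have ht : 0 < t := by omega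
  have hDj : j + t - u = (i + t - u) + 1 := by omega
  have h1t : 1 % t = 1 := Nat.mod_eq_of_lt (by omega)
  have hstep : ((i + t - u) + 1) % t = ((i + t - u) % t + 1) % t := by
    rw [Nat.add_mod (i + t - u) 1 t, h1t]
  have hDlt : (i + t - u) % t < t := Nat.mod_lt _ ht
  by_cases hwrap : (i + t - u) % t + 1 = t
  · exfalso
    rw [hDj, hstep, hwrap, Nat.mod_self] at hjS
    omega
  · rw [hDj, hstep, Nat.mod_eq_of_lt (by omega)] at hjS
    have hjval : (j + t - u) % t = s := by
      rw [hDj, hstep, Nat.mod_eq_of_lt (by omega)]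
      omega
    have := modH2 t hu hj
    rw [hjval] at this
    exact this.symm

lemma bd2 {i j : ℕ} (hs : 0 < s) (hst : s < t) (hu : u < t) (hi : i < t) (hj : j < t)
    (hiS : (i + t - u) % t < s) (hjS : ¬ ((j + t - u) % t < s)) (hij : j + 1 = i) :
    i = u := by
  have ht : 0 < t := by omega
  have hDi : i + t - u = (j + t - u) + 1 := by omega
  have h1t : 1 % t = 1 := Nat.mod_eq_of_lt (by omega)
  have hstep : ((j + t - u) + 1) % t = ((j + t - u) % t + 1) % t := by
    rw [Nat.add_mod (j + t - u) 1 t, h1t]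
  have hDlt : (j + t - u) % t < t := Nat.mod_lt _ ht
  by_cases hwrap : (j + t - u) % t + 1 = t
  · have hi0 : (i + t - u) % t = 0 := by
      rw [hDi, hstep, hwrap, Nat.mod_self]
    have := modH2 t hu hi
    rw [hi0, Nat.add_zero, Nat.mod_eq_of_lt hu] at this
    exact this.symm
  · exfalso
    rw [hDi, hstep, Nat.mod_eq_of_lt (by omega)] at hiS
    omega

end Boundary

lemma step_cut (hs : 2 < s) (hst : s < t) (hgcd : Nat.gcd s t = 1) {n : ℕ}
    (h2 : 2 ≤ n) (hn : n < t + 1) :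
    EraseStep s t ((CoprimeGraph s t).deleteEdges (R s t n))
      ((CoprimeGraph s t).deleteEdges (R s t n ∪ {f s t n})) := by
  have ht : 0 < t := by omega
  have hult : (n-2) * s % t < t := Nat.mod_lt _ ht
  have hplt : (n-1) * s % t < t := Nat.mod_lt _ ht
  have hp1 : 1 ≤ (n-1) * s % t :=
    Nat.one_le_iff_ne_zero.mpr (cut_ne_zero hgcd (by omega) (by omega))
  have hpu : (n-1) * s % t = ((n-2) * s % t + s) % t := by
    rw [Nat.mod_add_mod]
    congr 1
    rw [show n - 1 = n - 2 + 1 from by omega, add_one_mul]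
  apply eraseStep_of (by rw [card_Vt]; omega)
    ((SEG t ((n-2) * s % t) s).image Sum.inl) (va s t)
    (by simp [va]) (by rw [Finset.card_image_of_injective _ Sum.inl_injective,
      card_SEG hult (le_of_lt hst)])
  · -- edge
    rw [f_eq_cut s t h2 hn, mem_edgeSet, aa, aa]
    apply (adj_AA_iff s t _ _).mpr
    left
    show ((n-1) * s % t - 1) % t + 1 = ((n-1) * s % t) % t
    have hin : ((n-1) * s % t - 1) % t = (n-1) * s % t - 1 := Nat.mod_eq_of_lt (by omega)
    have hin2 : ((n-1) * s % t) % t = (n-1) * s % t := Nat.mod_eq_of_lt hplt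
    rw [hin, hin2]
    omega
  · rw [mem_R]
    rintro ⟨i, hi, hfi⟩
    exact f_ne_f s t hs hst hgcd hi (by omega) hfi
  · -- endpoints
    refine ⟨aa s t ((n-1) * s % t - 1), ?_, aa s t ((n-1) * s % t), ?_, by simp [aa, va], ?_⟩
    · rw [aa]
      apply Finset.mem_image_of_mem
      rw [mem_SEG]
      show (((n-1) * s % t - 1) % t + t - (n-2) * s % t) % t < s
      have hin : ((n-1) * s % t - 1) % t = (n-1) * s % t - 1 := Nat.mod_eq_of_lt (by omega)
      rw [hin, hpu, ep1 (by omega) hst hult (by rw [← hpu]; exact hp1)]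
      omega
    · rw [aa]
      intro hmem
      obtain ⟨i, hiS, hieq⟩ := Finset.mem_image.mp hmem
      rw [mem_SEG] at hiS
      have hival : (i : ℕ) = ((n-1) * s % t) % t := congrArg Fin.val (Sum.inl_injective hieq)
      rw [Nat.mod_eq_of_lt hplt] at hival
      rw [hival, hpu, ep2 (by omega) hst hult] at hiS
      omega
    · rw [f_eq_cut s t h2 hn]
  · -- uniqueness
    intro x hx y hy hyv hadj
    obtain ⟨i, hiS, rfl⟩ := Finset.mem_image.mp hx
    rw [mem_SEG] at hiS
    rcases y with j | bj | k
    · -- A-A crossing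
      have hjS : ¬ ((j : ℕ) + t - (n-2) * s % t) % t < s := by
        intro hjmem
        exact hy (Finset.mem_image_of_mem _ (mem_SEG.mpr hjmem))
      rcases (adj_AA_iff s t i j).mp hadj with hij | hij
      · -- new cut edge
        left
        have hjp : (j : ℕ) = ((n-2) * s % t + s) % t :=
          bd1 (by omega) hst hult i.isLt j.isLt hiS hjS hij
        rw [← hpu] at hjp
        rw [f_eq_cut s t h2 hn, inl_eq_aa s t hplt hjp,
          inl_eq_aa s t (m := (n-1) * s % t - 1) (by omega) (by omega)]
      · -- previous cut edge
        have hiu : (i : ℕ) = (n-2) * s % t :=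
          bd2 (by omega) hst hult i.isLt j.isLt hiS hjS hij
        have hnn2 : 2 ≤ n - 1 := by
          by_contra hcon
          have hn1 : n = 2 := by omega
          rw [hn1] at hiu
          simp at hiu
          simp [hiu] at hij
        have hu1 : 1 ≤ (n-2) * s % t :=
          Nat.one_le_iff_ne_zero.mpr (cut_ne_zero hgcd (by omega) (by omega))
        right
        rw [mem_R]
        refine ⟨n - 1, by omega, ?_⟩
        rw [f_eq_cut s t hnn2 (by omega)]
        rw [show n - 1 - 1 = n - 2 from by omega]
        rw [inl_eq_aa s t (m := (n-2) * s % t) hult hiu,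
          inl_eq_aa s t (m := (n-2) * s % t - 1) (by omega) (by omega), Sym2.eq_swap]
    · exact absurd hadj (adj_AB_iff s t i bj)
    · rcases hub_cases s t k with hk | hk
      · exact absurd hk hyv
      · right
        rw [hk] at hadj
        have hival : (i : ℕ) = t - 1 := (adj_Avb_iff s t i).mp hadj
        rw [mem_R]
        refine ⟨0, by omega, ?_⟩
        rw [f_eq0, hk, ← inl_eq_aa s t (by omega) hival, Sym2.eq_swap]


lemma mem_SEG0 {t len : ℕ} {i : Fin t} : i ∈ SEG t 0 len ↔ (i : ℕ) < len := by
  rw [mem_SEG, Nat.sub_zero, Nat.add_mod_right, Nat.mod_eq_of_lt i.isLt]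

def AlowF : Finset (Vt s t) := (SEG t 0 (s-1)).image Sum.inl

lemma mem_AlowF {x : Vt s t} :
    x ∈ AlowF s t ↔ ∃ i : Fin t, (i : ℕ) < s - 1 ∧ x = Sum.inl i := by
  simp only [AlowF, Finset.mem_image]
  constructor
  · rintro ⟨i, hi, rfl⟩
    exact ⟨i, mem_SEG0.mp hi, rfl⟩
  · rintro ⟨i, hi, rfl⟩
    exact ⟨i, mem_SEG0.mpr hi, rfl⟩

lemma card_AlowF (hs : 2 < s) (hst : s < t) : (AlowF s t).card = s - 1 := by
  rw [AlowF, Finset.card_image_of_injective _ Sum.inl_injective,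
    card_SEG (by omega) (by omega)]

lemma ba_not_mem_AlowF (m : ℕ) : ba s t m ∉ AlowF s t := by
  rw [mem_AlowF, ba]
  rintro ⟨i, -, h⟩
  exact absurd h (by simp)

lemma step_spokeA (hs : 2 < s) (hst : s < t) (hgcd : Nat.gcd s t = 1) {n : ℕ}
    (h1 : t + 1 ≤ n) (hn : n < 2*t + 1) :
    EraseStep s t ((CoprimeGraph s t).deleteEdges (R s t n))
      ((CoprimeGraph s t).deleteEdges (R s t n ∪ {f s t n})) := by
  have ht : 0 < t := by omega
  apply eraseStep_of (by rw [card_Vt]; omega)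
    (insert (aa s t (n - (t+1))) (bpathF s t)) (vb s t)
    (by simp [vb, aa, mem_bpathF])
    (by rw [Finset.card_insert_of_notMem (by simp [aa, mem_bpathF]), bpathF,
        Finset.card_image_of_injective _ (fun a b hab => by simpa using hab)]
        simp
        omega)
  · rw [f_eq_spokeA s t h1 hn, mem_edgeSet, aa]
    exact (adj_Ava s t _).symm
  · rw [mem_R]
    rintro ⟨i, hi, hfi⟩
    exact f_ne_f s t hs hst hgcd hi (by omega) hfi
  · refine ⟨aa s t (n - (t+1)), Finset.mem_insert_self _ _, va s t, ?_, by simp [va, vb], ?_⟩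
    · simp [va, aa, mem_bpathF]
    · rw [f_eq_spokeA s t h1 hn]
      exact Sym2.eq_swap
  · intro x hx y hy hyv hadj
    rcases Finset.mem_insert.mp hx with hxa | hxb
    · subst hxa
      rcases y with k | bj | kk
      · -- path A edge, already removed
        right
        rw [mem_R, aa] at *
        rcases (adj_AA_iff s t _ _).mp hadj with hjk | hjk
        · obtain ⟨n', hn1, hn2, hn3⟩ := pathA_mem_f s t hs hst hgcd _ k hjk
          exact ⟨n', by omega, hn3⟩
        · obtain ⟨n', hn1, hn2, hn3⟩ := pathA_mem_f s t hs hst hgcd k _ hjk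
          exact ⟨n', by omega, by rw [hn3, Sym2.eq_swap]⟩
      · exact absurd (Finset.mem_insert_of_mem ((mem_bpathF s t).mpr ⟨bj, rfl⟩)) hy
      · rcases hub_cases s t kk with hk | hk
        · left
          rw [hk, f_eq_spokeA s t h1 hn]
          exact Sym2.eq_swap
        · exact absurd hk hyv
    · rw [mem_bpathF] at hxb
      obtain ⟨bi, rfl⟩ := hxb
      rcases y with k | bj | kk
      · exact absurd hadj ((adj_AB_iff s t k bi) ∘ SimpleGraph.Adj.symm)
      · exact absurd (Finset.mem_insert_of_mem ((mem_bpathF s t).mpr ⟨bj, rfl⟩)) hy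
      · rcases hub_cases s t kk with hk | hk
        · rw [hk] at hadj
          exact absurd hadj (adj_Bva s t bi)
        · exact absurd hk hyv

lemma step_pathB (hs : 2 < s) (hst : s < t) (hgcd : Nat.gcd s t = 1) {n : ℕ}
    (h1 : 2*t + 1 ≤ n) (hn : n < 2*t + s - 1) :
    EraseStep s t ((CoprimeGraph s t).deleteEdges (R s t n))
      ((CoprimeGraph s t).deleteEdges (R s t n ∪ {f s t n})) := by
  have ht : 0 < t := by omega
  have hjb : n - (2*t+1) < s - 1 := by omega
  have hjb2 : n - 2*t < s - 1 := by omega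
  apply eraseStep_of (by rw [card_Vt]; omega)
    (insert (ba s t (n - (2*t+1))) (AlowF s t)) (vb s t)
    (by
      rw [Finset.mem_insert]
      push_neg
      refine ⟨by simp [vb, ba], ?_⟩
      rw [mem_AlowF]
      rintro ⟨i, -, h⟩
      exact absurd h (by simp [vb]))
    (by rw [Finset.card_insert_of_notMem (ba_not_mem_AlowF s t _), card_AlowF s t hs hst]
        omega)
  · rw [f_eq_pathB s t h1 hn ht, mem_edgeSet, ba, ba]
    apply (adj_BB_iff s t _ _).mpr
    left
    show (n - (2*t+1)) % (s-1) + 1 = (n - 2*t) % (s-1)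
    rw [Nat.mod_eq_of_lt hjb, Nat.mod_eq_of_lt hjb2]
    omega
  · rw [mem_R]
    rintro ⟨i, hi, hfi⟩
    exact f_ne_f s t hs hst hgcd hi (by omega) hfi
  · refine ⟨ba s t (n - (2*t+1)), Finset.mem_insert_self _ _, ba s t (n - 2*t), ?_, ?_, ?_⟩
    · rw [Finset.mem_insert]
      push_neg
      refine ⟨?_, ba_not_mem_AlowF s t _⟩
      rw [ba, ba]
      intro hcon
      have h2 : (n - 2*t) % (s-1) = (n - (2*t+1)) % (s-1) :=
        congrArg Fin.val (Sum.inl_injective (Sum.inr_injective hcon))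
      rw [Nat.mod_eq_of_lt hjb2, Nat.mod_eq_of_lt hjb] at h2
      omega
    · simp [ba, vb]
    · rw [f_eq_pathB s t h1 hn ht]
  · intro x hx y hy hyv hadj
    rcases Finset.mem_insert.mp hx with hxa | hxb
    · subst hxa
      rcases y with k | bj | kk
      · exact absurd hadj ((adj_AB_iff s t k _) ∘ SimpleGraph.Adj.symm)
      · -- path B adjacency
        rw [ba] at hadj
        rcases (adj_BB_iff s t _ _).mp hadj with hjk | hjk
        · left
          have hjk' : (n - (2*t+1)) % (s-1) + 1 = (bj : ℕ) := hjk
          rw [Nat.mod_eq_of_lt hjb] at hjk'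
          have hyeq : (Sum.inr (Sum.inl bj) : Vt s t) = ba s t (n - 2*t) := by
            rw [ba]
            refine congrArg (fun z => Sum.inr (Sum.inl z)) (Fin.ext ?_)
            show (bj : ℕ) = (n - 2*t) % (s-1)
            rw [Nat.mod_eq_of_lt hjb2]
            omega
          rw [hyeq, f_eq_pathB s t h1 hn ht]
        · right
          have hjk' : (bj : ℕ) + 1 = (n - (2*t+1)) % (s-1) := hjk
          rw [Nat.mod_eq_of_lt hjb] at hjk'
          have hxeq : ba s t (n - (2*t+1)) =
              (Sum.inr (Sum.inl (⟨n - (2*t+1), hjb⟩ : Fin (s-1))) : Vt s t) := by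
            rw [ba]
            exact congrArg (fun z => Sum.inr (Sum.inl z)) (Fin.ext (Nat.mod_eq_of_lt hjb))
          rw [mem_R]
          refine ⟨2*t + 1 + (bj : ℕ), by omega, ?_⟩
          rw [pathB_edge s t hs hst bj ⟨n - (2*t+1), hjb⟩ hjk', hxeq, Sym2.eq_swap]
      · rcases hub_cases s t kk with hk | hk
        · rw [hk] at hadj
          exact absurd hadj (adj_Bva s t _)
        · exact absurd hk hyv
    · rw [mem_AlowF] at hxb
      obtain ⟨i, hilt, rfl⟩ := hxb
      rcases y with k | bj | kk
      · right
        rw [mem_R]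
        rcases (adj_AA_iff s t _ _).mp hadj with hjk | hjk
        · obtain ⟨n', hn1, hn2, hn3⟩ := pathA_mem_f s t hs hst hgcd _ k hjk
          exact ⟨n', by omega, hn3⟩
        · obtain ⟨n', hn1, hn2, hn3⟩ := pathA_mem_f s t hs hst hgcd k _ hjk
          exact ⟨n', by omega, by rw [hn3, Sym2.eq_swap]⟩
      · exact absurd hadj (adj_AB_iff s t i bj)
      · rcases hub_cases s t kk with hk | hk
        · right
          rw [mem_R]
          refine ⟨t + 1 + (i : ℕ), by omega, ?_⟩
          rw [spokeA_mem_f s t ht i, hk, Sym2.eq_swap]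
        · exact absurd hk hyv

lemma step_spokeB (hs : 2 < s) (hst : s < t) (hgcd : Nat.gcd s t = 1) {n : ℕ}
    (h1 : 2*t + s - 1 ≤ n) (hn : n < 2*t + 2*s - 2) :
    EraseStep s t ((CoprimeGraph s t).deleteEdges (R s t n))
      ((CoprimeGraph s t).deleteEdges (R s t n ∪ {f s t n})) := by
  have ht : 0 < t := by omega
  have hjb : n - (2*t + s - 1) < s - 1 := by omega
  apply eraseStep_of (by rw [card_Vt]; omega)
    (insert (ba s t (n - (2*t + s - 1))) (AlowF s t)) (va s t)
    (by
      rw [Finset.mem_insert]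
      push_neg
      refine ⟨by simp [va, ba], ?_⟩
      rw [mem_AlowF]
      rintro ⟨i, -, h⟩
      exact absurd h (by simp [va]))
    (by rw [Finset.card_insert_of_notMem (ba_not_mem_AlowF s t _), card_AlowF s t hs hst]
        omega)
  · rw [f_eq_spokeB s t h1 ht (by omega), mem_edgeSet, ba]
    exact (adj_Bvb s t _).symm
  · rw [mem_R]
    rintro ⟨i, hi, hfi⟩
    exact f_ne_f s t hs hst hgcd hi (by omega) hfi
  · refine ⟨ba s t (n - (2*t + s - 1)), Finset.mem_insert_self _ _, vb s t, ?_, ?_, ?_⟩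
    · rw [Finset.mem_insert]
      push_neg
      refine ⟨by simp [vb, ba], ?_⟩
      rw [mem_AlowF]
      rintro ⟨i, -, h⟩
      exact absurd h (by simp [vb])
    · simp [va, vb]
    · rw [f_eq_spokeB s t h1 ht (by omega)]
      exact Sym2.eq_swap
  · intro x hx y hy hyv hadj
    rcases Finset.mem_insert.mp hx with hxa | hxb
    · subst hxa
      rcases y with k | bj | kk
      · exact absurd hadj ((adj_AB_iff s t k _) ∘ SimpleGraph.Adj.symm)
      · -- path B edge already removed
        right
        rw [ba] at hadj
        rw [mem_R]
        have hxeq : ba s t (n - (2*t + s - 1)) =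
            (Sum.inr (Sum.inl (⟨n - (2*t + s - 1), hjb⟩ : Fin (s-1))) : Vt s t) := by
          rw [ba]
          exact congrArg (fun z => Sum.inr (Sum.inl z)) (Fin.ext (Nat.mod_eq_of_lt hjb))
        rcases (adj_BB_iff s t _ _).mp hadj with hjk | hjk
        · have hjk' : n - (2*t + s - 1) + 1 = (bj : ℕ) := by
            have h0 : (n - (2*t + s - 1)) % (s-1) + 1 = (bj : ℕ) := hjk
            rwa [Nat.mod_eq_of_lt hjb] at h0
          refine ⟨2*t + 1 + (n - (2*t + s - 1)), by omega, ?_⟩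
          rw [pathB_edge s t hs hst ⟨n - (2*t + s - 1), hjb⟩ bj hjk', hxeq]
        · have hjk' : (bj : ℕ) + 1 = n - (2*t + s - 1) := by
            have h0 : (bj : ℕ) + 1 = (n - (2*t + s - 1)) % (s-1) := hjk
            rwa [Nat.mod_eq_of_lt hjb] at h0
          refine ⟨2*t + 1 + (bj : ℕ), by omega, ?_⟩
          rw [pathB_edge s t hs hst bj ⟨n - (2*t + s - 1), hjb⟩ hjk', hxeq, Sym2.eq_swap]
      · rcases hub_cases s t kk with hk | hk
        · exact absurd hk hyv
        · left
          rw [hk, f_eq_spokeB s t h1 ht (by omega)]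
          exact Sym2.eq_swap
    · rw [mem_AlowF] at hxb
      obtain ⟨i, hilt, rfl⟩ := hxb
      rcases y with k | bj | kk
      · right
        rw [mem_R]
        rcases (adj_AA_iff s t _ _).mp hadj with hjk | hjk
        · obtain ⟨n', hn1, hn2, hn3⟩ := pathA_mem_f s t hs hst hgcd _ k hjk
          exact ⟨n', by omega, hn3⟩
        · obtain ⟨n', hn1, hn2, hn3⟩ := pathA_mem_f s t hs hst hgcd k _ hjk
          exact ⟨n', by omega, by rw [hn3, Sym2.eq_swap]⟩
      · exact absurd hadj (adj_AB_iff s t i bj)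
      · rcases hub_cases s t kk with hk | hk
        · exact absurd hk hyv
        · rw [hk] at hadj
          have := (adj_Avb_iff s t i).mp hadj
          omega


lemma R_zero : R s t 0 = ∅ := by
  rw [R]
  ext e
  simp

lemma c_zero : (CoprimeGraph s t).deleteEdges (R s t 0) = CoprimeGraph s t := by
  rw [R_zero, deleteEdges_empty]

lemma c_final (hs : 2 < s) (hst : s < t) (hgcd : Nat.gcd s t = 1) :
    (CoprimeGraph s t).deleteEdges (R s t (2*t + 2*s - 2)) = ⊥ := by
  ext x y
  simp only [deleteEdges_adj, bot_adj, iff_false, not_and, not_not]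
  intro hadj
  obtain ⟨n, hn, hfn⟩ := adj_mem_f s t hs hst hgcd hadj
  exact (mem_R s t).mpr ⟨n, hn, hfn⟩

lemma ncard_chain {W : Type*} [Fintype W] {s t : ℕ} {G : SimpleGraph W} {m : ℕ}
    {c : ℕ → SimpleGraph W} (h0 : c 0 = G) (hm : c m = ⊥)
    (hstep : ∀ i < m, EraseStep s t (c i) (c (i + 1))) : G.edgeSet.ncard = m := by
  have key : ∀ k, k ≤ m → (c (m - k)).edgeSet.ncard = k := by
    intro k
    induction k with
    | zero =>
      intro _
      rw [Nat.sub_zero, hm]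
      simp
    | succ k ih =>
      intro hk
      have hlt : m - (k+1) < m := by omega
      obtain ⟨e, he, hE, -⟩ := hstep _ hlt
      have hsucc : m - (k+1) + 1 = m - k := by omega
      rw [hsucc] at hE
      have h1 := ih (by omega)
      rw [hE] at h1
      have h2 := Set.ncard_diff_singleton_add_one he ((c _).edgeSet.toFinite)
      rw [h1] at h2
      exact h2.symm
  have hfin := key m le_rfl
  rw [Nat.sub_self, h0] at hfin
  exact hfin

lemma steps (hs : 2 < s) (hst : s < t) (hgcd : Nat.gcd s t = 1) :
    ∀ i < 2*t + 2*s - 2,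
      EraseStep s t ((CoprimeGraph s t).deleteEdges (R s t i))
        ((CoprimeGraph s t).deleteEdges (R s t (i + 1))) := by
  intro i hi
  rw [R_succ]
  rcases (show i = 0 ∨ i = 1 ∨ (2 ≤ i ∧ i < t+1) ∨ (t+1 ≤ i ∧ i < 2*t+1) ∨
      (2*t+1 ≤ i ∧ i < 2*t+s-1) ∨ (2*t+s-1 ≤ i) from by omega) with
    h | h | ⟨ha, hb⟩ | ⟨ha, hb⟩ | ⟨ha, hb⟩ | ha
  · subst h; exact step0 s t hs hst hgcd
  · subst h; exact step1 s t hs hst hgcd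
  · exact step_cut s t hs hst hgcd ha hb
  · exact step_spokeA s t hs hst hgcd ha hb
  · exact step_pathB s t hs hst hgcd ha hb
  · exact step_spokeB s t hs hst hgcd ha hi

end CoprimeErase

/-- For `t > s > 2` with `gcd(s,t) = 1`, the above graph is erasable and has
exactly `2s+2t−2` edges. -/
theorem coprimeGraph_erasable (s t : ℕ) (hs : 2 < s) (hst : s < t)
    (hgcd : Nat.gcd s t = 1) :
    Erasable s t (CoprimeGraph s t) ∧
      (CoprimeGraph s t).edgeSet.ncard = 2 * s + 2 * t - 2 := by
  haveI : NeZero t := ⟨by omega⟩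
  haveI : NeZero (s - 1) := ⟨by omega⟩
  have h0 := CoprimeErase.c_zero s t
  have hm := CoprimeErase.c_final s t hs hst hgcd
  have hsteps := CoprimeErase.steps s t hs hst hgcd
  constructor
  · exact ⟨2*t + 2*s - 2, fun n => (CoprimeGraph s t).deleteEdges (CoprimeErase.R s t n),
      h0, hm, hsteps⟩
  · have hcount := CoprimeErase.ncard_chain h0 hm hsteps
    rw [hcount]
    omega
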